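/- Let A be a finitary abelian category. Then h^R_{MN} = g^R_{MN} · a_M · a_N / a_R, where g^R_{MN} is the number of subobjects U of R with U ≅ N and R/U ≅ M, and a_X = |Aut_A(X)| for any object X. -/

import Mathlib

open CategoryTheory CategoryTheory.Limits

universe v u

namespace HallPaper

variable {C : Type u} [Category.{v} C] [Abelian C]

/-- A short exact sequence `0 → N → E → M → 0`: an extension of `M` by `N`. -/
structure Extension (M N : C) where
  E : C
  ι : N ⟶ E
  π : E ⟶ M
  w : ι ≫ π = 0
  shortExact : (ShortComplex.mk ι π w).ShortExact

/-- Equivalence of extensions: an isomorphism of middle terms commuting with the maps. -/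
def extEquiv {M N : C} (e₁ e₂ : Extension M N) : Prop :=
  ∃ φ : e₁.E ≅ e₂.E, e₁.ι ≫ φ.hom = e₂.ι ∧ φ.hom ≫ e₂.π = e₁.π

/-- `Ext¹(M,N)` as the set of equivalence classes of extensions of `M` by `N`. -/
def Ext1 (M N : C) : Type _ := Quot (@extEquiv C _ _ M N)

/-- The subset of `Ext¹(M,N)` of classes whose middle term is isomorphic to `R`. -/
def Ext1R (M N R : C) : Type _ :=
  Quot (fun (e₁ e₂ : {e : Extension M N // Nonempty (e.E ≅ R)}) => extEquiv e₁.1 e₂.1)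

/-- The Hall number `h^R_{M N} = |Ext¹(M,N)_R| / |Hom(M,N)|`. -/
noncomputable def hallNum (M N R : C) : ℚ :=
  (Nat.card (Ext1R M N R) : ℚ) / (Nat.card (M ⟶ N) : ℚ)

/-- `a_X = |Aut X|`. -/
noncomputable def autCard (X : C) : ℚ := (Nat.card (Aut X) : ℚ)

/-- The set of isomorphism classes of objects of `C`. -/
abbrev IsoCls (C : Type u) [Category.{v} C] : Type u := Quotient (isIsomorphicSetoid C)

/-- The isomorphism class of an object. -/
def cls (X : C) : IsoCls C := Quotient.mk _ X

end HallPaper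

namespace HallPaper

/-- `g^R_{MN}`: the number of subobjects `U ≤ R` with `U ≅ N` and `R/U ≅ M`. -/
noncomputable def subCount {C : Type u} [Category.{v} C] [Abelian C] (M N R : C) : ℚ :=
  (Nat.card {U : Subobject R //
      Nonempty ((U : C) ≅ N) ∧ Nonempty (Limits.cokernel U.arrow ≅ M)} : ℚ)

end HallPaper

namespace HallPaper

variable {C : Type u} [Category.{v} C] [Abelian C]

/-- A concrete short exact sequence `0 → N → R → M → 0` with fixed middle term `R`. -/
structure SES (M N R : C) where
  i : N ⟶ R
  p : R ⟶ M
  w : i ≫ p = 0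
  se : (ShortComplex.mk i p w).ShortExact

variable {M N R : C}

theorem SES.ext' {s t : SES M N R} (h1 : s.i = t.i) (h2 : s.p = t.p) : s = t := by
  cases s; cases t; simp_all

instance (s : SES M N R) : Mono s.i := s.se.mono_f
instance (s : SES M N R) : Epi s.p := s.se.epi_g

/-- `p` is a cokernel of `i`. -/
noncomputable def SES.isCokernel (s : SES M N R) :
    IsColimit (CokernelCofork.ofπ s.p s.w) := s.se.gIsCokernel

/-- `i` is a kernel of `p`. -/
noncomputable def SES.isKernel (s : SES M N R) :
    IsLimit (KernelFork.ofι s.i s.w) := s.se.fIsKernel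

instance : MulAction (Aut R) (SES M N R) where
  smul φ s :=
    { i := s.i ≫ φ.hom
      p := φ.inv ≫ s.p
      w := by simp [s.w, Iso.hom_inv_id_assoc (φ : R ≅ R)]
      se := by
        refine ShortComplex.shortExact_of_iso ?_ s.se
        exact ShortComplex.isoMk (Iso.refl _) φ (Iso.refl _) (by simp) (by simp [Iso.hom_inv_id_assoc (φ : R ≅ R)]) }
  one_smul s := SES.ext' (by show s.i ≫ (Iso.refl R).hom = s.i; simp)
    (by show (Iso.refl R).inv ≫ s.p = s.p; simp)
  mul_smul φ ψ s := SES.ext'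
    (by show s.i ≫ (ψ.trans φ).hom = (s.i ≫ ψ.hom) ≫ φ.hom; simp [Iso.trans_hom (ψ : R ≅ R) (φ : R ≅ R)])
    (by show (ψ.trans φ).inv ≫ s.p = φ.inv ≫ ψ.inv ≫ s.p; rw [Iso.trans_inv (ψ : R ≅ R) (φ : R ≅ R), Category.assoc])

theorem smul_i (φ : Aut R) (s : SES M N R) : (φ • s).i = s.i ≫ φ.hom := rfl
theorem smul_p (φ : Aut R) (s : SES M N R) : (φ • s).p = φ.inv ≫ s.p := rfl


/-- The automorphism `1 + p ≫ h ≫ i` of `R`, for `h : M ⟶ N`. -/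
noncomputable def stabOfHom (s : SES M N R) (h : M ⟶ N) : Aut R where
  hom := 𝟙 R + s.p ≫ h ≫ s.i
  inv := 𝟙 R - s.p ≫ h ≫ s.i
  hom_inv_id := by
    have hx : (s.p ≫ h ≫ s.i) ≫ (s.p ≫ h ≫ s.i) = 0 := by
      rw [Category.assoc, Category.assoc, reassoc_of% s.w]
      simp
    simp [Preadditive.comp_add, Preadditive.add_comp, Preadditive.comp_sub, Preadditive.sub_comp, hx]
  inv_hom_id := by
    have hx : (s.p ≫ h ≫ s.i) ≫ (s.p ≫ h ≫ s.i) = 0 := by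
      rw [Category.assoc, Category.assoc, reassoc_of% s.w]
      simp
    simp [Preadditive.comp_add, Preadditive.add_comp, Preadditive.comp_sub, Preadditive.sub_comp, hx]

theorem stabOfHom_smul (s : SES M N R) (h : M ⟶ N) : stabOfHom s h • s = s := by
  refine SES.ext' ?_ ?_
  · show s.i ≫ (𝟙 R + s.p ≫ h ≫ s.i) = s.i
    simp [Preadditive.comp_add, reassoc_of% s.w]
  · show (𝟙 R - s.p ≫ h ≫ s.i) ≫ s.p = s.p
    simp [Preadditive.sub_comp, Category.assoc, s.w]

theorem stabOfHom_injective (s : SES M N R) : Function.Injective (stabOfHom s) := by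
  intro h₁ h₂ hyp
  have : 𝟙 R + s.p ≫ h₁ ≫ s.i = 𝟙 R + s.p ≫ h₂ ≫ s.i := congrArg Iso.hom hyp
  have h3 : s.p ≫ h₁ ≫ s.i = s.p ≫ h₂ ≫ s.i := by
    exact add_left_cancel this
  rw [cancel_epi s.p, cancel_mono s.i] at h3
  exact h3

/-- The stabilizer of `s` under the `Aut R`-action is in bijection with `Hom(M,N)`. -/
noncomputable def stabEquivHom (s : SES M N R) :
    MulAction.stabilizer (Aut R) s ≃ (M ⟶ N) := by
  refine (Equiv.ofBijective
    (fun h : M ⟶ N => (⟨stabOfHom s h, stabOfHom_smul s h⟩ : MulAction.stabilizer (Aut R) s))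
    ⟨fun h₁ h₂ hyp => stabOfHom_injective s (Subtype.ext_iff.mp hyp), ?_⟩).symm
  rintro ⟨φ, hφ⟩
  have hi : s.i ≫ φ.hom = s.i := congrArg SES.i hφ
  have hp' : φ.inv ≫ s.p = s.p := congrArg SES.p hφ
  have hp : φ.hom ≫ s.p = s.p := by
    conv_lhs => rw [← hp']
    rw [Iso.hom_inv_id_assoc (φ : R ≅ R)]
  -- `φ.hom - 𝟙 R` kills `p`, so factors through `i`
  have hd : (φ.hom - 𝟙 R) ≫ s.p = 0 := by simp [Preadditive.sub_comp, hp]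
  obtain ⟨u, hu⟩ := KernelFork.IsLimit.lift' s.isKernel (φ.hom - 𝟙 R) hd
  simp only [Fork.ι_ofι] at hu
  have hiu : s.i ≫ u = 0 := by
    rw [← cancel_mono s.i, Category.assoc, hu, zero_comp, Preadditive.comp_sub, hi]
    simp
  obtain ⟨h, hh⟩ := CokernelCofork.IsColimit.desc' s.isCokernel u hiu
  simp only [Cofork.π_ofπ] at hh
  refine ⟨h, Subtype.ext (Aut.ext ?_)⟩
  show 𝟙 R + s.p ≫ h ≫ s.i = φ.hom
  rw [← Category.assoc, hh, hu]
  abel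


section OrbitExt

variable (M N R : C)

/-- The extension associated to a concrete s.e.s. with middle term `R`. -/
def SES.toExt (s : SES M N R) : {e : Extension M N // Nonempty (e.E ≅ R)} :=
  ⟨⟨R, s.i, s.p, s.w, s.se⟩, ⟨Iso.refl R⟩⟩

variable {M N R}

/-- Transport an extension with `E ≅ R` to a concrete s.e.s. with middle term `R`. -/
def Extension.transport (e : Extension M N) (φ : e.E ≅ R) : SES M N R where
  i := e.ι ≫ φ.hom
  p := φ.inv ≫ e.π
  w := by simp [e.w]
  se := by
    refine ShortComplex.shortExact_of_iso ?_ e.shortExact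
    exact ShortComplex.isoMk (Iso.refl _) φ (Iso.refl _) (by simp) (by simp)

theorem transport_orbitRel (e₁ e₂ : Extension M N) (φ₁ : e₁.E ≅ R) (φ₂ : e₂.E ≅ R)
    (h : extEquiv e₁ e₂) :
    (MulAction.orbitRel (Aut R) (SES M N R)).r (e₁.transport φ₁) (e₂.transport φ₂) := by
  obtain ⟨ψ, h1, h2⟩ := h
  refine ⟨(φ₂.symm ≪≫ ψ.symm ≪≫ φ₁ : Aut R), SES.ext' ?_ ?_⟩
  · show (e₂.ι ≫ φ₂.hom) ≫ (φ₂.symm ≪≫ ψ.symm ≪≫ φ₁).hom = e₁.ι ≫ φ₁.hom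
    simp [← h1]
  · show (φ₂.symm ≪≫ ψ.symm ≪≫ φ₁).inv ≫ φ₂.inv ≫ e₂.π = φ₁.inv ≫ e₁.π
    simp [h2]

/-- `Ext¹(M,N)_R` is in bijection with the orbit space of the `Aut R`-action on
concrete short exact sequences. -/
noncomputable def ext1REquivOrbits :
    Ext1R M N R ≃ MulAction.orbitRel.Quotient (Aut R) (SES M N R) where
  toFun := Quot.lift
    (fun e => Quotient.mk (MulAction.orbitRel (Aut R) (SES M N R))
       (e.1.transport e.2.some))
    (by
      intro e₁ e₂ h
      exact Quotient.sound (transport_orbitRel e₁.1 e₂.1 e₁.2.some e₂.2.some h))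
  invFun := Quotient.lift (fun s : SES M N R => Quot.mk _ (SES.toExt M N R s))
    (by
      intro s₁ s₂ h
      obtain ⟨φ, rfl⟩ := h
      refine Quot.sound ⟨φ.symm, ?_, ?_⟩
      · show (s₂.i ≫ φ.hom) ≫ φ.inv = s₂.i
        rw [Category.assoc, Iso.hom_inv_id (φ : R ≅ R), Category.comp_id]
      · show φ.symm.hom ≫ s₂.p = φ.inv ≫ s₂.p
        rfl)
  left_inv := by
    rintro ⟨e, he⟩
    refine Quot.sound ?_
    show extEquiv (SES.toExt M N R (Extension.transport e he.some)).1 e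
    refine ⟨he.some.symm, ?_, ?_⟩
    · show (e.ι ≫ he.some.hom) ≫ he.some.inv = e.ι
      simp
    · show he.some.inv ≫ e.π = he.some.inv ≫ e.π
      rfl
  right_inv := by
    intro ω
    induction ω using Quotient.inductionOn with
    | h s =>
      refine Quotient.sound ?_
      show (SES.toExt M N R s).1.transport _ ∈ MulAction.orbit (Aut R) s
      exact ⟨((SES.toExt M N R s).2.some : Aut R), rfl⟩

end OrbitExt



section Fiber

variable {M N R : C}

/-- The subobject of `R` determined by a concrete short exact sequence. -/
def SES.sub (s : SES M N R) : Subobject R := Subobject.mk s.i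

theorem SES.arrow_eq (s : SES M N R) {U : Subobject R} (hs : s.sub = U) :
    (Subobject.isoOfMkEq s.i U hs).hom ≫ U.arrow = s.i :=
  Subobject.ofMkLE_arrow _

theorem SES.arrow_eq' (s : SES M N R) {U : Subobject R} (hs : s.sub = U) :
    U.arrow = (Subobject.isoOfMkEq s.i U hs).inv ≫ s.i := by
  rw [Iso.eq_inv_comp]
  exact s.arrow_eq hs

theorem SES.arrow_p (s : SES M N R) {U : Subobject R} (hs : s.sub = U) :
    U.arrow ≫ s.p = 0 := by
  rw [s.arrow_eq' hs, Category.assoc, s.w, comp_zero]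

theorem SES.i_coker_arrow (s : SES M N R) {U : Subobject R} (hs : s.sub = U) :
    s.i ≫ cokernel.π U.arrow = 0 := by
  rw [← s.arrow_eq hs, Category.assoc, cokernel.condition, comp_zero]

/-- The cokernel of the associated subobject is isomorphic to `M`. -/
noncomputable def SES.subCokerIso (s : SES M N R) {U : Subobject R} (hs : s.sub = U) :
    cokernel U.arrow ≅ M where
  hom := cokernel.desc U.arrow s.p (s.arrow_p hs)
  inv := (CokernelCofork.IsColimit.desc' s.isCokernel (cokernel.π U.arrow)
    (s.i_coker_arrow hs)).1
  hom_inv_id := by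
    have h2 := (CokernelCofork.IsColimit.desc' s.isCokernel (cokernel.π U.arrow)
      (s.i_coker_arrow hs)).2
    simp only [Cofork.π_ofπ] at h2
    rw [← cancel_epi (cokernel.π U.arrow), cokernel.π_desc_assoc, h2, Category.comp_id]
  inv_hom_id := by
    have h2 := (CokernelCofork.IsColimit.desc' s.isCokernel (cokernel.π U.arrow)
      (s.i_coker_arrow hs)).2
    simp only [Cofork.π_ofπ] at h2
    rw [← cancel_epi s.p, ← Category.assoc, h2, cokernel.π_desc, Category.comp_id]

theorem SES.coker_subCokerIso (s : SES M N R) {U : Subobject R} (hs : s.sub = U) :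
    cokernel.π U.arrow ≫ (s.subCokerIso hs).hom = s.p := by
  simp [SES.subCokerIso]

/-- A concrete s.e.s. built from a subobject and isomorphisms. -/
noncomputable def sesOfSub (U : Subobject R) (α : N ≅ (U : C)) (β : cokernel U.arrow ≅ M) :
    SES M N R where
  i := α.hom ≫ U.arrow
  p := cokernel.π U.arrow ≫ β.hom
  w := by
    rw [Category.assoc, reassoc_of% (cokernel.condition U.arrow)]
    simp
  se := by
    refine ShortComplex.shortExact_of_iso
      (S₁ := ShortComplex.mk U.arrow (cokernel.π U.arrow) (cokernel.condition _))
      (ShortComplex.isoMk α.symm (Iso.refl R) β ?_ ?_)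
      (ShortComplex.ShortExact.mk' (ShortComplex.exact_cokernel U.arrow)
        inferInstance inferInstance)
    · simp
    · simp

theorem sesOfSub_sub (U : Subobject R) (α : N ≅ (U : C)) (β : cokernel U.arrow ≅ M) :
    (sesOfSub U α β).sub = U := by
  show Subobject.mk (α.hom ≫ U.arrow) = U
  rw [Subobject.mk_eq_mk_of_comm (α.hom ≫ U.arrow) U.arrow α rfl, Subobject.mk_arrow]

/-- The fiber of `SES.sub` over `U` is in bijection with `(N ≅ U) × (cokernel U.arrow ≅ M)`. -/
noncomputable def fiberEquiv (U : Subobject R) :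
    {s : SES M N R // s.sub = U} ≃ ((N ≅ (U : C)) × (cokernel U.arrow ≅ M)) where
  toFun := fun st => ⟨Subobject.isoOfMkEq st.1.i U st.2, st.1.subCokerIso st.2⟩
  invFun := fun ab => ⟨sesOfSub U ab.1 ab.2, sesOfSub_sub U ab.1 ab.2⟩
  left_inv := by
    rintro ⟨s, hs⟩
    refine Subtype.ext (SES.ext' ?_ ?_)
    · exact s.arrow_eq hs
    · exact s.coker_subCokerIso hs
  right_inv := by
    rintro ⟨α, β⟩
    refine Prod.ext ?_ ?_
    · refine Iso.ext ?_
      rw [← cancel_mono U.arrow]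
      exact (sesOfSub U α β).arrow_eq (sesOfSub_sub U α β)
    · refine Iso.ext ?_
      rw [← cancel_epi (cokernel.π U.arrow)]
      exact (sesOfSub U α β).coker_subCokerIso (sesOfSub_sub U α β)

end Fiber


section Counting

variable (M N R : C)

instance [Finite (N ⟶ R)] [Finite (R ⟶ M)] : Finite (SES M N R) :=
  Finite.of_injective (fun s => ((s.i, s.p) : (N ⟶ R) × (R ⟶ M)))
    (fun s t h => SES.ext' (congrArg Prod.fst h) (congrArg Prod.snd h))

instance (X Y : C) [Finite (X ⟶ Y)] : Finite (X ≅ Y) :=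
  Finite.of_injective (fun e => e.hom) (fun _ _ h => Iso.ext h)

instance (X : C) [Finite (X ⟶ X)] : Finite (Aut X) :=
  Finite.of_injective (fun e => e.hom) (fun _ _ h => Aut.ext h)

/-- Given one isomorphism `A ≅ B`, the isomorphisms `A ≅ B` biject with `Aut A`. -/
def autEquivIso {A B : C} (e₀ : A ≅ B) : Aut A ≃ (A ≅ B) where
  toFun φ := (φ : A ≅ A) ≪≫ e₀
  invFun ψ := ((ψ ≪≫ e₀.symm : A ≅ A) : Aut A)
  left_inv φ := by
    show ((φ : A ≅ A) ≪≫ e₀) ≪≫ e₀.symm = (φ : A ≅ A)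
    ext
    simp [Iso.trans_hom (φ : A ≅ A) e₀]
  right_inv ψ := by
    show ((ψ ≪≫ e₀.symm : A ≅ A) : A ≅ A) ≪≫ e₀ = ψ
    ext
    simp

/-- Given one isomorphism `A ≅ B`, the isomorphisms `A ≅ B` biject with `Aut B`. -/
def autEquivIso' {A B : C} (e₀ : A ≅ B) : Aut B ≃ (A ≅ B) where
  toFun φ := e₀ ≪≫ (φ : B ≅ B)
  invFun ψ := ((e₀.symm ≪≫ ψ : B ≅ B) : Aut B)
  left_inv φ := by
    show (e₀.symm ≪≫ (e₀ ≪≫ (φ : B ≅ B)) : Aut B) = φ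
    ext
    simp [Iso.trans_hom e₀ (φ : B ≅ B)]
  right_inv ψ := by
    show e₀ ≪≫ ((e₀.symm ≪≫ ψ : B ≅ B) : B ≅ B) = ψ
    ext
    simp

variable [∀ X Y : C, Finite (X ⟶ Y)]

/-- Subobjects of `R` isomorphic to `N` with quotient isomorphic to `M`. -/
abbrev SubT : Type _ := {U : Subobject R //
    Nonempty ((U : C) ≅ N) ∧ Nonempty (Limits.cokernel U.arrow ≅ M)}

/-- The classifying map from short exact sequences to marked subobjects. -/
noncomputable def SES.toSubT (s : SES M N R) : SubT M N R :=
  ⟨s.sub, ⟨(Subobject.underlyingIso s.i).symm.symm⟩, ⟨s.subCokerIso rfl⟩⟩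

theorem toSubT_surjective : Function.Surjective (SES.toSubT M N R) := by
  rintro ⟨U, ⟨hα⟩, ⟨hβ⟩⟩
  exact ⟨sesOfSub U hα.symm hβ, Subtype.ext (sesOfSub_sub U hα.symm hβ)⟩

instance : Finite (SubT M N R) := Finite.of_surjective _ (toSubT_surjective M N R)

theorem card_SES :
    Nat.card (SES M N R) =
      Nat.card (SubT M N R) * Nat.card (Aut N) * Nat.card (Aut M) := by
  classical
  letI : Fintype (SubT M N R) := Fintype.ofFinite _
  letI : ∀ U : SubT M N R, Fintype {s : SES M N R // SES.toSubT M N R s = U} :=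
    fun U => Fintype.ofFinite _
  have e2 : ∀ U : SubT M N R,
      {s : SES M N R // SES.toSubT M N R s = U}
        ≃ ((N ≅ (U.1 : C)) × (cokernel U.1.arrow ≅ M)) := by
    intro U
    refine (Equiv.subtypeEquivRight ?_).trans (fiberEquiv U.1)
    intro s
    exact ⟨fun h => congrArg Subtype.val h, fun h => Subtype.ext h⟩
  have hcard : ∀ U : SubT M N R,
      Fintype.card {s : SES M N R // SES.toSubT M N R s = U}
        = Nat.card (Aut N) * Nat.card (Aut M) := by
    intro U
    rw [← Nat.card_eq_fintype_card, Nat.card_congr (e2 U), Nat.card_prod]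
    congr 1
    · exact (Nat.card_congr (autEquivIso U.2.1.some.symm)).symm
    · exact (Nat.card_congr (autEquivIso' U.2.2.some)).symm
  rw [Nat.card_congr (Equiv.sigmaFiberEquiv (SES.toSubT M N R)).symm,
    Nat.card_eq_fintype_card, Fintype.card_sigma,
    Finset.sum_congr rfl (fun U _ => hcard U), Finset.sum_const, smul_eq_mul,
    Finset.card_univ, ← Nat.card_eq_fintype_card, mul_assoc]

theorem card_Ext1R_mul :
    Nat.card (Ext1R M N R) * Nat.card (Aut R)
      = Nat.card (SES M N R) * Nat.card (M ⟶ N) := by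
  classical
  letI : Fintype (SES M N R) := Fintype.ofFinite _
  letI : Fintype (Aut R) := Fintype.ofFinite _
  letI : Fintype (MulAction.orbitRel.Quotient (Aut R) (SES M N R)) := Fintype.ofFinite _
  rw [Nat.card_congr (ext1REquivOrbits (M := M) (N := N) (R := R))]
  have horb : ∀ s : SES M N R,
      Nat.card (MulAction.orbit (Aut R) s) * Nat.card (M ⟶ N) = Nat.card (Aut R) := by
    intro s
    letI : Fintype (MulAction.orbit (Aut R) s) := Fintype.ofFinite _
    letI : Fintype (MulAction.stabilizer (Aut R) s) := Fintype.ofFinite _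
    rw [← Nat.card_congr (stabEquivHom s)]
    simp only [Nat.card_eq_fintype_card]
    exact MulAction.card_orbit_mul_card_stabilizer_eq_card_group (Aut R) s
  letI : ∀ ω : MulAction.orbitRel.Quotient (Aut R) (SES M N R),
      Fintype (MulAction.orbit (Aut R) ω.out) := fun ω => Fintype.ofFinite _
  calc Nat.card (MulAction.orbitRel.Quotient (Aut R) (SES M N R)) * Nat.card (Aut R)
      = ∑ ω : MulAction.orbitRel.Quotient (Aut R) (SES M N R), Nat.card (Aut R) := by
        rw [Finset.sum_const, smul_eq_mul, Finset.card_univ, Nat.card_eq_fintype_card]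
    _ = ∑ ω : MulAction.orbitRel.Quotient (Aut R) (SES M N R),
          Nat.card (MulAction.orbit (Aut R) ω.out) * Nat.card (M ⟶ N) := by
        exact (Finset.sum_congr rfl (fun ω _ => (horb ω.out).symm))
    _ = (∑ ω : MulAction.orbitRel.Quotient (Aut R) (SES M N R),
          Nat.card (MulAction.orbit (Aut R) ω.out)) * Nat.card (M ⟶ N) := by
        rw [Finset.sum_mul]
    _ = Nat.card (SES M N R) * Nat.card (M ⟶ N) := by
        congr 1
        rw [Nat.card_congr (MulAction.selfEquivSigmaOrbits (Aut R) (SES M N R)),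
          Nat.card_eq_fintype_card, Fintype.card_sigma]
        exact Finset.sum_congr rfl (fun ω _ => Nat.card_eq_fintype_card)

end Counting

end HallPaper


/-- **Riedtmann's formula**: `h^R_{MN} = g^R_{MN} · a_M · a_N / a_R` in a finitary
abelian category. -/
theorem riedtmann_formula
    {C : Type u} [Category.{v} C] [Abelian C]
    [∀ X Y : C, Finite (X ⟶ Y)] [∀ X Y : C, Finite (HallPaper.Ext1 X Y)]
    (M N R : C) :
    HallPaper.hallNum M N R =
      HallPaper.subCount M N R * HallPaper.autCard M * HallPaper.autCard N /
        HallPaper.autCard R := by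
  classical
  have hHom : (Nat.card (M ⟶ N) : ℚ) ≠ 0 := by
    have h1 : Nat.card (M ⟶ N) ≠ 0 := Nat.card_ne_zero.mpr ⟨⟨0⟩, inferInstance⟩
    exact_mod_cast h1
  have hAutR : HallPaper.autCard R ≠ 0 := by
    have h1 : Nat.card (Aut R) ≠ 0 := Nat.card_ne_zero.mpr ⟨⟨Iso.refl R⟩, inferInstance⟩
    unfold HallPaper.autCard
    exact_mod_cast h1
  have hd : (Nat.card (HallPaper.Ext1R M N R) : ℚ) * (Nat.card (Aut R) : ℚ)
      = (Nat.card (HallPaper.SES M N R) : ℚ) * (Nat.card (M ⟶ N) : ℚ) := by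
    exact_mod_cast HallPaper.card_Ext1R_mul M N R
  have hc : (Nat.card (HallPaper.SES M N R) : ℚ)
      = (Nat.card (HallPaper.SubT M N R) : ℚ) * (Nat.card (Aut N) : ℚ)
          * (Nat.card (Aut M) : ℚ) := by
    exact_mod_cast HallPaper.card_SES M N R
  unfold HallPaper.hallNum HallPaper.subCount HallPaper.autCard
  rw [div_eq_div_iff hHom (by unfold HallPaper.autCard at hAutR; exact_mod_cast hAutR)]
  rw [hd, hc]
  show (Nat.card (HallPaper.SubT M N R) : ℚ) * (Nat.card (Aut N) : ℚ)
      * (Nat.card (Aut M) : ℚ) * (Nat.card (M ⟶ N) : ℚ)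
    = (Nat.card (HallPaper.SubT M N R) : ℚ) * (Nat.card (Aut M) : ℚ)
      * (Nat.card (Aut N) : ℚ) * (Nat.card (M ⟶ N) : ℚ)
  ring
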